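/- Let G : B ⥤ D be a functor with B small and D locally small. If G satisfies the Weak Pullback Condition, then for every object d of D the comma category d/G is weakly cofiltered. -/
import Mathlib


/-!
STATEMENT 10: If a functor `G : B ⥤ D` (with `B` small, `D` locally small) satisfies the
Weak Pullback Condition, then for every object `d` of `D` the comma category `d/G` is
weakly cofiltered.
-/

open CategoryTheory CategoryTheory.Limits Opposite

universe u v w

/-- A category is weakly cofiltered if every cospan can be completed to a commutative
square. -/
def WeaklyCofiltered (K : Type*) [Category K] : Prop :=
  ∀ ⦃b c d₀ : K⦄ (f : b ⟶ d₀) (g : c ⟶ d₀),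
    ∃ (a : K) (p : a ⟶ b) (q : a ⟶ c), p ≫ f = q ≫ g

/-- A commuting square `p ≫ f = q ≫ g` in `D` is a weak pullback square if every other
commuting square on the cospan `(f, g)` factors (not necessarily uniquely) through it. -/
def IsWeakPullback {D : Type*} [Category D] {a b₁ b₂ b₀ : D}
    (p : a ⟶ b₁) (q : a ⟶ b₂) (f : b₁ ⟶ b₀) (g : b₂ ⟶ b₀) : Prop :=
  p ≫ f = q ≫ g ∧
    ∀ ⦃e : D⦄ (h : e ⟶ b₁) (k : e ⟶ b₂), h ≫ f = k ≫ g →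
      ∃ l : e ⟶ a, l ≫ p = h ∧ l ≫ q = k

/-- The Weak Pullback Condition (WPC) for a functor `G : B ⥤ D`: every cospan in `B` can
be completed to a commutative square that `G` sends to a weak pullback square in `D`. -/
def WeakPullbackCondition {B : Type*} [Category B] {D : Type*} [Category D]
    (G : B ⥤ D) : Prop :=
  ∀ ⦃b₀ b₁ b₂ : B⦄ (f : b₁ ⟶ b₀) (g : b₂ ⟶ b₀),
    ∃ (a : B) (p : a ⟶ b₁) (q : a ⟶ b₂), p ≫ f = q ≫ g ∧
      IsWeakPullback (G.map p) (G.map q) (G.map f) (G.map g)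

theorem statement10 {B : Type u} [SmallCategory B] {D : Type w} [Category.{v} D]
    (G : B ⥤ D) (hG : WeakPullbackCondition G) (d : D) :
    WeaklyCofiltered (StructuredArrow d G) := by
  intro X Y Z f g
  obtain ⟨a, p, q, hpq, hwp⟩ := hG f.right g.right
  have hsq : X.hom ≫ G.map f.right = Y.hom ≫ G.map g.right := by
    rw [StructuredArrow.w f, StructuredArrow.w g]
  obtain ⟨l, hl1, hl2⟩ := hwp.2 X.hom Y.hom hsq
  refine ⟨StructuredArrow.mk l, StructuredArrow.homMk p hl1,
    StructuredArrow.homMk q hl2, ?_⟩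
  ext
  exact hpq
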